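/- Let (p_i)_{i∈𝕀} be a non-degenerate probability distribution on a countable set 𝕀 (i.e., not concentrated on a single point) and let G_1, G_2, … be i.i.d. with this distribution. Then P((G_1,…,G_k) is a primitive word) → 1 as k → ∞, and more generally, for every fixed l ≥ 1, Σ_{i ∈ Q_k} (p_{i_1} ⋯ p_{i_k})^l is asymptotically equivalent, as k → ∞, to Σ_{i ∈ 𝕀^k} (p_{i_1} ⋯ p_{i_k})^l = (Σ_{i∈𝕀} p_i^l)^k = ‖p‖_l^{lk}. -/

import Mathlib

open MeasureTheory ProbabilityTheory Filter Topology
open scoped ENNReal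

/-- A word (finite list) is primitive if it is not a nontrivial power `y^m`, `m ≥ 2`,
of another word. -/
def IsPrimitiveWord {α : Type*} (w : List α) : Prop :=
  ¬ ∃ (y : List α) (m : ℕ), 2 ≤ m ∧ w = (List.replicate m y).flatten

namespace Stmt12Aux


/-- weight of a word -/
noncomputable def wt (p : ℝ → ℝ≥0∞) (l : ℕ) (w : List ℝ) : ℝ≥0∞ :=
  (w.map fun a => p a ^ l).prod

variable {p : ℝ → ℝ≥0∞} {l : ℕ} {𝕀 : Set ℝ}

@[simp] lemma wt_nil : wt p l ([] : List ℝ) = 1 := rfl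

@[simp] lemma wt_cons {a : ℝ} {w : List ℝ} : wt p l (a :: w) = p a ^ l * wt p l w := by
  simp [wt]

lemma wt_append {w v : List ℝ} : wt p l (w ++ v) = wt p l w * wt p l v := by
  simp [wt]

lemma wt_flatten_replicate {m : ℕ} {y : List ℝ} :
    wt p l (List.replicate m y).flatten = wt p l y ^ m := by
  induction m with
  | zero => simp [wt]
  | succ n ih => rw [List.replicate_succ, List.flatten_cons, wt_append, ih, pow_succ, mul_comm]

lemma wt_le_pow {M : ℝ≥0∞} {w : List ℝ} (h : ∀ a ∈ w, p a ^ l ≤ M) :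
    wt p l w ≤ M ^ w.length := by
  induction w with
  | nil => simp
  | cons a w ih =>
      simp only [wt_cons, List.length_cons, pow_succ]
      rw [mul_comm (M ^ w.length) M]
      exact mul_le_mul' (h a (by simp)) (ih fun b hb => h b (List.mem_cons_of_mem _ hb))

lemma wt_le_one (hp : ∀ a, p a ≤ 1) (w : List ℝ) : wt p l w ≤ 1 := by
  induction w with
  | nil => simp
  | cons a w ih =>
      calc wt p l (a :: w) = p a ^ l * wt p l w := wt_cons
      _ ≤ 1 ^ l * 1 := mul_le_mul' (pow_le_pow_left' (hp a) l) ih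
      _ = 1 := by simp

/-- All 𝕀-words of length k -/
def Wd (𝕀 : Set ℝ) (k : ℕ) : Type := {w : List ℝ // w.length = k ∧ ∀ a ∈ w, a ∈ 𝕀}

instance : Unique (Wd 𝕀 0) where
  default := ⟨[], by simp⟩
  uniq := fun w => Subtype.ext (List.length_eq_zero_iff.mp w.2.1)

/-- cons as an equivalence -/
def consEquiv (𝕀 : Set ℝ) (k : ℕ) : 𝕀 × Wd 𝕀 k ≃ Wd 𝕀 (k + 1) where
  toFun x := ⟨(x.1 : ℝ) :: x.2.1, by
    refine ⟨by simp [x.2.2.1], fun a ha => ?_⟩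
    rcases List.mem_cons.1 ha with h | h
    · exact h ▸ x.1.2
    · exact x.2.2.2 a h⟩
  invFun w :=
    have h : w.1 ≠ [] := by
      intro hnil; have := w.2.1; rw [hnil] at this; simp at this
    (⟨⟨w.1.head h, w.2.2 _ (List.head_mem h)⟩,
      ⟨w.1.tail, by
        constructor
        · have := w.2.1
          simp [List.length_tail, this]
        · exact fun a ha => w.2.2 a (List.mem_of_mem_tail ha)⟩⟩ : 𝕀 × Wd 𝕀 k)
  left_inv x := by
    ext <;> simp <;> rfl
  right_inv w := by
    apply Subtype.ext
    simp [List.cons_head_tail]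

lemma tsum_wt_all (p : ℝ → ℝ≥0∞) (l : ℕ) (𝕀 : Set ℝ) (k : ℕ) :
    ∑' w : Wd 𝕀 k, wt p l w.1 = (∑' i : 𝕀, p (i : ℝ) ^ l) ^ k := by
  induction k with
  | zero =>
      rw [pow_zero]
      rw [tsum_eq_single (default : Wd 𝕀 0) (fun b hb => absurd (Subsingleton.elim b default) hb)]
      simp [default]
  | succ n ih =>
      rw [← (consEquiv 𝕀 n).tsum_eq (fun w : Wd 𝕀 (n+1) => wt p l w.1)]
      have : ∀ x : 𝕀 × Wd 𝕀 n, wt p l ((consEquiv 𝕀 n) x).1 = p (x.1 : ℝ) ^ l * wt p l x.2.1 := by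
        intro x; exact wt_cons
      rw [tsum_congr this, ENNReal.tsum_prod']
      simp_rw [ENNReal.tsum_mul_left]
      rw [ENNReal.tsum_mul_right, ih, pow_succ]; ring


/-- primitive 𝕀-words, as in the statement -/
def PW (𝕀 : Set ℝ) (k : ℕ) : Type :=
  {w : List ℝ // w.length = k ∧ IsPrimitiveWord w ∧ ∀ a ∈ w, a ∈ 𝕀}

/-- non-primitive 𝕀-words -/
def NW (𝕀 : Set ℝ) (k : ℕ) : Type :=
  {w : List ℝ // (w.length = k ∧ ∀ a ∈ w, a ∈ 𝕀) ∧ ¬ IsPrimitiveWord w}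

def ePW (𝕀 : Set ℝ) (k : ℕ) :
    PW 𝕀 k ≃ {x : Wd 𝕀 k // x ∈ {w : Wd 𝕀 k | IsPrimitiveWord w.1}} where
  toFun w := ⟨⟨w.1, ⟨w.2.1, w.2.2.2⟩⟩, w.2.2.1⟩
  invFun x := ⟨x.1.1, ⟨x.1.2.1, x.2, x.1.2.2⟩⟩
  left_inv w := rfl
  right_inv x := rfl

def eNW (𝕀 : Set ℝ) (k : ℕ) :
    NW 𝕀 k ≃ {x : Wd 𝕀 k // x ∈ {w : Wd 𝕀 k | IsPrimitiveWord w.1}ᶜ} where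
  toFun w := ⟨⟨w.1, w.2.1⟩, w.2.2⟩
  invFun x := ⟨x.1.1, ⟨x.1.2, x.2⟩⟩
  left_inv w := rfl
  right_inv x := rfl

lemma tsum_split (p : ℝ → ℝ≥0∞) (l : ℕ) (𝕀 : Set ℝ) (k : ℕ) :
    (∑' w : PW 𝕀 k, wt p l w.1) + (∑' w : NW 𝕀 k, wt p l w.1)
      = (∑' i : 𝕀, p (i : ℝ) ^ l) ^ k := by
  rw [← tsum_wt_all p l 𝕀 k]
  rw [← Summable.tsum_add_tsum_compl (s := {w : Wd 𝕀 k | IsPrimitiveWord w.1})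
    (f := fun w : Wd 𝕀 k => wt p l w.1) ENNReal.summable ENNReal.summable]
  congr 1
  · calc ∑' w : PW 𝕀 k, wt p l w.1 = ∑' w : PW 𝕀 k, wt p l ((ePW 𝕀 k) w).1.1 :=
        tsum_congr (fun w => by rfl)
      _ = _ := (ePW 𝕀 k).tsum_eq (fun x => wt p l x.1.1)
  · calc ∑' w : NW 𝕀 k, wt p l w.1 = ∑' w : NW 𝕀 k, wt p l ((eNW 𝕀 k) w).1.1 :=
        tsum_congr (fun w => by rfl)
      _ = _ := (eNW 𝕀 k).tsum_eq (fun x => wt p l x.1.1)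

lemma length_flatten_replicate (m : ℕ) (y : List ℝ) :
    (List.replicate m y).flatten.length = m * y.length := by
  induction m with
  | zero => simp
  | succ n ih => rw [List.replicate_succ, List.flatten_cons, List.length_append, ih]; ring

lemma tsum_nonprim_le (p : ℝ → ℝ≥0∞) (l : ℕ) (𝕀 : Set ℝ) (k : ℕ) (hk : 1 ≤ k)
    {M : ℝ≥0∞} (hM : ∀ a ∈ 𝕀, p a ^ l ≤ M) (hMS : M ≤ ∑' i : 𝕀, p (i : ℝ) ^ l) :
    ∑' w : NW 𝕀 k, wt p l w.1
      ≤ (k / 2 + 1 : ℕ) * (M ^ (k - k / 2) * (∑' i : 𝕀, p (i : ℝ) ^ l) ^ (k / 2)) := by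
  classical
  set S := ∑' i : 𝕀, p (i : ℝ) ^ l with hS
  -- data extraction for a non-primitive word
  have hex : ∀ w : NW 𝕀 k, ∃ y : List ℝ, ∃ m : ℕ, 2 ≤ m ∧ w.1 = (List.replicate m y).flatten :=
    fun w => not_not.mp w.2.2
  choose y m hm hw using hex
  have hlen : ∀ w : NW 𝕀 k, m w * (y w).length = k := fun w => by
    have := w.2.1.1
    rw [hw w, length_flatten_replicate] at this
    exact this
  have hdpos : ∀ w : NW 𝕀 k, 0 < (y w).length := fun w => by
    rcases Nat.eq_zero_or_pos (y w).length with h | h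
    · exfalso; have := hlen w; rw [h, Nat.mul_zero] at this; omega
    · exact h
  have hd2 : ∀ w : NW 𝕀 k, (y w).length ≤ k / 2 := fun w => by
    have h1 := hlen w
    have h2 := hm w
    have : (y w).length * 2 ≤ k := by nlinarith [hdpos w]
    omega
  have hmem : ∀ w : NW 𝕀 k, ∀ a ∈ y w, a ∈ 𝕀 := fun w a ha => by
    apply w.2.1.2
    rw [hw w]
    exact List.mem_flatten.mpr ⟨y w, List.mem_replicate.mpr ⟨by have := hm w; omega, rfl⟩, ha⟩
  -- the injection
  let g : NW 𝕀 k → Σ d : Fin (k / 2 + 1), Wd 𝕀 d :=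
    fun w => ⟨⟨(y w).length, Nat.lt_succ_of_le (hd2 w)⟩, ⟨y w, rfl, hmem w⟩⟩
  have hginj : Function.Injective g := by
    have hF : ∀ w : NW 𝕀 k,
        (List.replicate (k / ((g w).2.1.length)) (g w).2.1).flatten = w.1 := by
      intro w
      have : (g w).2.1 = y w := rfl
      rw [this]
      have : k / (y w).length = m w := by
        rw [← hlen w, Nat.mul_div_cancel _ (hdpos w)]
      rw [this, ← hw w]
    intro a b hab
    apply Subtype.ext
    rw [← hF a, ← hF b, hab]
  -- bound through the injection
  have hbound : ∀ w : NW 𝕀 k, wt p l w.1 ≤ M ^ (k - (g w).2.1.length) * wt p l (g w).2.1 := by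
    intro w
    have hgw : (g w).2.1 = y w := rfl
    rw [hgw, hw w, wt_flatten_replicate]
    have h1 : wt p l (y w) ≤ M ^ (y w).length :=
      wt_le_pow (fun a ha => hM a (hmem w a ha))
    calc wt p l (y w) ^ m w = wt p l (y w) ^ (m w - 1) * wt p l (y w) := by
          rw [← pow_succ]; congr 1; have := hm w; omega
      _ ≤ (M ^ (y w).length) ^ (m w - 1) * wt p l (y w) :=
          mul_le_mul' (pow_le_pow_left' h1 _) le_rfl
      _ = M ^ (k - (y w).length) * wt p l (y w) := by
          rw [← pow_mul]
          congr 2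
          rw [Nat.mul_sub, mul_one, mul_comm, hlen w]
  calc ∑' w : NW 𝕀 k, wt p l w.1
      ≤ ∑' x : Σ d : Fin (k / 2 + 1), Wd 𝕀 d, M ^ (k - x.2.1.length) * wt p l x.2.1 :=
        ENNReal.summable.tsum_le_tsum_of_inj g hginj (fun _ _ => zero_le) hbound
          ENNReal.summable
    _ = ∑' d : Fin (k / 2 + 1), ∑' v : Wd 𝕀 d, M ^ (k - v.1.length) * wt p l v.1 :=
        ENNReal.tsum_sigma' _
    _ = ∑' d : Fin (k / 2 + 1), M ^ (k - (d : ℕ)) * S ^ (d : ℕ) := by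
        refine tsum_congr fun d => ?_
        rw [show (∑' v : Wd 𝕀 d, M ^ (k - v.1.length) * wt p l v.1)
            = ∑' v : Wd 𝕀 d, M ^ (k - (d : ℕ)) * wt p l v.1 from
          tsum_congr fun v => by rw [v.2.1]]
        rw [ENNReal.tsum_mul_left, tsum_wt_all]
    _ ≤ ∑' _d : Fin (k / 2 + 1), M ^ (k - k / 2) * S ^ (k / 2) := by
        refine ENNReal.summable.tsum_le_tsum (fun d => ?_) ENNReal.summable
        have hdle : (d : ℕ) ≤ k / 2 := Nat.lt_succ_iff.mp d.isLt
        have hsplit : k - (d : ℕ) = (k - k / 2) + (k / 2 - (d : ℕ)) := by omega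
        rw [hsplit, pow_add, mul_assoc]
        refine mul_le_mul' le_rfl ?_
        calc M ^ (k / 2 - (d : ℕ)) * S ^ (d : ℕ)
            ≤ S ^ (k / 2 - (d : ℕ)) * S ^ (d : ℕ) :=
              mul_le_mul' (pow_le_pow_left' hMS _) le_rfl
          _ = S ^ (k / 2) := by rw [← pow_add]; congr 1; omega
    _ = (k / 2 + 1 : ℕ) * (M ^ (k - k / 2) * S ^ (k / 2)) := by
        rw [tsum_fintype]
        simp [Finset.card_univ, mul_comm]
  


/-- The main analytic lemma: the ratio of the primitive-word sum to `S^k` tends to 1. -/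
lemma master (p : ℝ → ℝ≥0∞) (𝕀 : Set ℝ) (hp1 : ∀ a, p a ≤ 1)
    (hsum : ∑' i : 𝕀, p (i : ℝ) = 1)
    (b c : ℝ) (hb : b ∈ 𝕀) (hc : c ∈ 𝕀) (hbc : b ≠ c) (hpb : p b ≠ 0) (hpc : p c ≠ 0)
    (l : ℕ) (hl : 1 ≤ l) :
    Tendsto (fun k : ℕ => (∑' w : PW 𝕀 k, wt p l w.1).toReal
      / (∑' i : 𝕀, p (i : ℝ) ^ l).toReal ^ k) atTop (𝓝 1) := by
  classical
  set S : ℝ≥0∞ := ∑' i : 𝕀, p (i : ℝ) ^ l with hSdef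
  set ε : ℝ≥0∞ := (min (p b) (p c)) ^ l with hεdef
  set M : ℝ≥0∞ := S - ε with hMdef
  -- basic facts
  have hSle1 : S ≤ 1 := by
    rw [← hsum]
    exact ENNReal.tsum_le_tsum fun i => by
      simpa using pow_le_pow_right_of_le_one' (hp1 (i : ℝ)) hl
  have hSne_top : S ≠ ∞ := ne_top_of_le_ne_top ENNReal.one_ne_top hSle1
  have hεne0 : ε ≠ 0 := pow_ne_zero l (lt_min (pos_iff_ne_zero.mpr hpb) (pos_iff_ne_zero.mpr hpc)).ne'
  have hεS : ε ≤ S := by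
    calc ε ≤ p b ^ l := pow_le_pow_left' (min_le_left _ _) l
    _ ≤ S := ENNReal.le_tsum (⟨b, hb⟩ : 𝕀)
  have hS0 : S ≠ 0 := fun h => hεne0 (le_antisymm (h ▸ hεS) zero_le)
  have hMS : M ≤ S := tsub_le_self
  have hM : ∀ a ∈ 𝕀, p a ^ l ≤ M := by
    intro a ha
    rcases eq_or_ne a b with rfl | hab
    · -- use c
      have hsum2 : p a ^ l + p c ^ l ≤ S := by
        have : ∑ x ∈ ({⟨a, ha⟩, ⟨c, hc⟩} : Finset 𝕀), p (x : ℝ) ^ l ≤ S :=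
          ENNReal.sum_le_tsum _
        rwa [Finset.sum_pair (by simp [hbc])] at this
      refine le_trans (ENNReal.le_sub_of_add_le_right (by
        exact ne_top_of_le_ne_top ENNReal.one_ne_top (pow_le_one' (hp1 c) l)) hsum2)
        (tsub_le_tsub_left (pow_le_pow_left' (min_le_right _ _) l) _)
    · have hsum2 : p a ^ l + p b ^ l ≤ S := by
        have : ∑ x ∈ ({⟨a, ha⟩, ⟨b, hb⟩} : Finset 𝕀), p (x : ℝ) ^ l ≤ S :=
          ENNReal.sum_le_tsum _
        rwa [Finset.sum_pair (by simp [hab])] at this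
      refine le_trans (ENNReal.le_sub_of_add_le_right (by
        exact ne_top_of_le_ne_top ENNReal.one_ne_top (pow_le_one' (hp1 b) l)) hsum2)
        (tsub_le_tsub_left (pow_le_pow_left' (min_le_left _ _) l) _)
  have hMne_top : M ≠ ∞ := ne_top_of_le_ne_top hSne_top hMS
  -- real versions
  set Sr : ℝ := S.toReal with hSr
  set Mr : ℝ := M.toReal with hMr
  have hSrpos : 0 < Sr := ENNReal.toReal_pos hS0 hSne_top
  have hMrlt : Mr < Sr := by
    rw [hMr, hMdef, ENNReal.toReal_sub_of_le hεS hSne_top]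
    have : 0 < ε.toReal := ENNReal.toReal_pos hεne0 (ne_top_of_le_ne_top hSne_top hεS)
    linarith
  have hMrnonneg : 0 ≤ Mr := ENNReal.toReal_nonneg
  set θ : ℝ := Mr / Sr with hθ
  have hθ0 : 0 ≤ θ := div_nonneg hMrnonneg hSrpos.le
  have hθ1 : θ < 1 := (div_lt_one hSrpos).mpr hMrlt
  -- the error term
  set T : ℕ → ℝ≥0∞ := fun k => ∑' w : PW 𝕀 k, wt p l w.1 with hT
  set N : ℕ → ℝ≥0∞ := fun k => ∑' w : NW 𝕀 k, wt p l w.1 with hN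
  have hTN : ∀ k, T k + N k = S ^ k := fun k => tsum_split p l 𝕀 k
  have hSkne_top : ∀ k : ℕ, S ^ k ≠ ∞ := fun k => ENNReal.pow_ne_top hSne_top
  have hTne_top : ∀ k, T k ≠ ∞ := fun k =>
    ne_top_of_le_ne_top (hSkne_top k) (le_trans le_self_add (hTN k).le)
  have hNne_top : ∀ k, N k ≠ ∞ := fun k =>
    ne_top_of_le_ne_top (hSkne_top k) (le_trans le_add_self (hTN k).le)
  have hTr : ∀ k, (T k).toReal = Sr ^ k - (N k).toReal := by
    intro k
    have := congrArg ENNReal.toReal (hTN k)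
    rw [ENNReal.toReal_add (hTne_top k) (hNne_top k), ENNReal.toReal_pow] at this
    linarith
  -- main expression as 1 - r k
  have hexpr : ∀ k, (T k).toReal / Sr ^ k = 1 - (N k).toReal / Sr ^ k := by
    intro k
    have hSk : (Sr : ℝ) ^ k ≠ 0 := pow_ne_zero _ hSrpos.ne'
    rw [hTr k, sub_div, div_self hSk]
  -- bound on r k
  have hrle : ∀ k : ℕ, 1 ≤ k → (N k).toReal / Sr ^ k ≤ (k + 1 : ℝ) * Real.sqrt θ ^ k := by
    intro k hk
    have hNle := tsum_nonprim_le p l 𝕀 k hk hM hMS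
    have hNler : (N k).toReal ≤ (k / 2 + 1 : ℕ) * (Mr ^ (k - k / 2) * Sr ^ (k / 2)) := by
      have h1 := ENNReal.toReal_mono (by
          refine ENNReal.mul_ne_top (by simp) (ENNReal.mul_ne_top ?_ ?_)
          · exact ENNReal.pow_ne_top hMne_top
          · exact ENNReal.pow_ne_top hSne_top) hNle
      rwa [ENNReal.toReal_mul, ENNReal.toReal_mul, ENNReal.toReal_pow, ENNReal.toReal_pow,
        ENNReal.toReal_natCast] at h1
    have hSkpos : 0 < Sr ^ k := pow_pos hSrpos k
    rw [div_le_iff₀ hSkpos]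
    calc (N k).toReal ≤ (k / 2 + 1 : ℕ) * (Mr ^ (k - k / 2) * Sr ^ (k / 2)) := hNler
      _ ≤ (k + 1 : ℝ) * (Real.sqrt θ ^ k * Sr ^ k) := by
          have hsplit : Mr ^ (k - k / 2) * Sr ^ (k / 2)
              = θ ^ (k - k / 2) * Sr ^ k := by
            have hMθ : Mr = θ * Sr := by rw [hθ, div_mul_cancel₀ _ hSrpos.ne']
            rw [hMθ, mul_pow, mul_assoc, ← pow_add]
            congr 2
            omega
          rw [hsplit]
          have hθpow : θ ^ (k - k / 2) ≤ Real.sqrt θ ^ k := by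
            have h1 : θ ^ (k - k / 2) = Real.sqrt θ ^ (2 * (k - k / 2)) := by
              rw [pow_mul, Real.sq_sqrt hθ0]
            rw [h1]
            refine pow_le_pow_of_le_one (Real.sqrt_nonneg θ) ?_ (by omega)
            exact Real.sqrt_le_one.mpr hθ1.le
          have hcard : ((k / 2 + 1 : ℕ) : ℝ) ≤ (k + 1 : ℝ) := by
            have : (k / 2 + 1 : ℕ) ≤ k + 1 := by omega
            exact_mod_cast this
          refine mul_le_mul hcard ?_ (by positivity) (by positivity)
          exact mul_le_mul_of_nonneg_right hθpow (by positivity)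
      _ = (k + 1 : ℝ) * Real.sqrt θ ^ k * Sr ^ k := by ring
  -- the bound tends to zero
  have hσ0 : 0 ≤ Real.sqrt θ := Real.sqrt_nonneg θ
  have hσ1 : Real.sqrt θ < 1 := by
    rw [show (1 : ℝ) = Real.sqrt 1 from (Real.sqrt_one).symm]
    exact Real.sqrt_lt_sqrt hθ0 hθ1
  have hbound0 : Tendsto (fun k : ℕ => (k + 1 : ℝ) * Real.sqrt θ ^ k) atTop (𝓝 0) := by
    have h1 := tendsto_self_mul_const_pow_of_lt_one hσ0 hσ1
    have h2 := tendsto_pow_atTop_nhds_zero_of_lt_one hσ0 hσ1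
    have := h1.add h2
    simpa [add_mul] using this
  have hr0 : Tendsto (fun k : ℕ => (N k).toReal / Sr ^ k) atTop (𝓝 0) := by
    refine tendsto_of_tendsto_of_tendsto_of_le_of_le' tendsto_const_nhds hbound0 ?_ ?_
    · exact Eventually.of_forall fun k => by positivity
    · exact eventually_atTop.mpr ⟨1, fun k hk => hrle k hk⟩
  have : Tendsto (fun k : ℕ => 1 - (N k).toReal / Sr ^ k) atTop (𝓝 1) := by
    have := tendsto_const_nhds (x := (1:ℝ)) (f := atTop (α := ℕ)) |>.sub hr0
    simpa using this
  exact this.congr fun k => (hexpr k).symm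

lemma tsum_singleton_eq_one (𝕀 : Set ℝ) (h𝕀 : 𝕀.Countable)
    (μ : Measure ℝ) [IsProbabilityMeasure μ] (hμ : μ 𝕀ᶜ = 0) :
    ∑' i : 𝕀, μ {(i : ℝ)} = 1 := by
  have h1 : ∑' i : 𝕀, μ (id ⁻¹' {(i : ℝ)}) = μ (id ⁻¹' 𝕀) :=
    tsum_measure_preimage_singleton h𝕀 fun y _ => by
      simpa using measurableSet_singleton y
  simp only [Set.preimage_id] at h1
  have h2 : μ 𝕀 = 1 := by
    have := measure_add_measure_compl (μ := μ) h𝕀.measurableSet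
    rw [hμ, add_zero] at this
    simpa [measure_univ] using this
  rw [← h2, ← h1]

lemma exists_atoms (𝕀 : Set ℝ) (h𝕀 : 𝕀.Countable)
    (μ : Measure ℝ) [IsProbabilityMeasure μ] (hμ : μ 𝕀ᶜ = 0)
    (hnondeg : ∀ a : ℝ, μ {a} ≠ 1) :
    ∃ b ∈ 𝕀, ∃ c ∈ 𝕀, b ≠ c ∧ μ {b} ≠ 0 ∧ μ {c} ≠ 0 := by
  have hsum := tsum_singleton_eq_one 𝕀 h𝕀 μ hμ
  -- there is an atom
  have h1 : ∃ i : 𝕀, μ {(i : ℝ)} ≠ 0 := by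
    by_contra h
    push_neg at h
    rw [tsum_congr (fun i => h i), tsum_zero] at hsum
    exact zero_ne_one hsum
  obtain ⟨i0, hi0⟩ := h1
  -- there is a second atom
  have h2 : ∃ j : 𝕀, j ≠ i0 ∧ μ {(j : ℝ)} ≠ 0 := by
    by_contra h
    push_neg at h
    rw [tsum_eq_single i0 (fun j hj => by
      by_contra hne
      exact hne (h j hj))] at hsum
    exact hnondeg (i0 : ℝ) hsum
  obtain ⟨j0, hj0ne, hj0⟩ := h2
  exact ⟨i0, i0.2, j0, j0.2, fun h => hj0ne (Subtype.ext h.symm), hi0, hj0⟩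

lemma wt_toReal (p : ℝ → ℝ≥0∞) (l : ℕ) (w : List ℝ) :
    ((w.map fun a => (p a).toReal).prod) ^ l = (wt p l w).toReal := by
  induction w with
  | nil => simp [wt]
  | cons a w ih =>
      simp only [List.map_cons, List.prod_cons, mul_pow, wt, ENNReal.toReal_mul] at *
      rw [ih, ENNReal.toReal_pow]

lemma prod_getD {M : Type*} [CommMonoid M] (f : ℝ → M) (w : List ℝ) :
    (w.map f).prod = ∏ j ∈ Finset.range w.length, f (w.getD j 0) := by
  induction w with
  | nil => simp
  | cons a w ih =>
      rw [List.map_cons, List.prod_cons, List.length_cons, Finset.prod_range_succ', ih]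
      simp [mul_comm]

theorem countablePW (𝕀 : Set ℝ) (h𝕀 : 𝕀.Countable) (k : ℕ) : Countable (PW 𝕀 k) := by
  have : Countable 𝕀 := h𝕀.to_subtype
  have : Countable (List 𝕀) := inferInstance
  refine Function.Injective.countable
    (f := fun w : PW 𝕀 k => (w.1.pmap (fun a h => (⟨a, h⟩ : 𝕀)) w.2.2.2 : List 𝕀)) ?_
  intro v w h
  apply Subtype.ext
  have hv : (v.1.pmap (fun a h => (⟨a, h⟩ : 𝕀)) v.2.2.2).map Subtype.val = v.1 := by
    simp [List.map_pmap]
  have hw : (w.1.pmap (fun a h => (⟨a, h⟩ : 𝕀)) w.2.2.2).map Subtype.val = w.1 := by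
    simp [List.map_pmap]
  rw [← hv, ← hw]
  exact congrArg (List.map Subtype.val) h

lemma prob_ge {Ω : Type*} [MeasurableSpace Ω] (P : Measure Ω) [IsProbabilityMeasure P]
    (𝕀 : Set ℝ) (h𝕀 : 𝕀.Countable)
    (μ : Measure ℝ) [IsProbabilityMeasure μ]
    (G : ℕ → Ω → ℝ) (hmeas : ∀ j, Measurable (G j))
    (hindep : iIndepFun G P)
    (hdist : ∀ j, Measure.map (G j) P = μ) (k : ℕ) :
    (∑' w : PW 𝕀 k, wt (fun a => μ {a}) 1 w.1)
      ≤ P {ω | IsPrimitiveWord (List.ofFn fun j : Fin k => G j ω)} := by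
  classical
  have : Countable (PW 𝕀 k) := countablePW 𝕀 h𝕀 k
  set A : PW 𝕀 k → Set Ω := fun w => ⋂ j ∈ Finset.range k, G j ⁻¹' {w.1.getD j 0} with hA
  have hAmeas : ∀ w, MeasurableSet (A w) := fun w =>
    MeasurableSet.biInter (Set.to_countable _)
      (fun j _ => (hmeas j) (measurableSet_singleton _))
  -- a point of A w produces the word w
  have hword : ∀ w : PW 𝕀 k, ∀ ω ∈ A w, (List.ofFn fun j : Fin k => G j ω) = w.1 := by
    intro w ω hω
    have hlen : (List.ofFn fun j : Fin k => G j ω).length = w.1.length := by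
      simp [w.2.1]
    refine List.ext_getElem hlen ?_
    intro j hj1 hj2
    have hjk : j < k := by simpa using hj1
    have hωj : G j ω = w.1.getD j 0 := by
      have := Set.mem_iInter₂.mp hω j (Finset.mem_range.mpr hjk)
      simpa using this
    rw [List.getElem_ofFn]
    simp only [Fin.cast]
    rw [hωj, List.getD_eq_getElem]
  have hAdisj : Pairwise (Function.onFun Disjoint A) := by
    intro v w hvw
    rw [Function.onFun, Set.disjoint_left]
    intro ω hv hw
    apply hvw
    apply Subtype.ext
    rw [← hword v ω hv, ← hword w ω hw]
  -- measure of each cell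
  have hAmeasure : ∀ w : PW 𝕀 k, P (A w) = wt (fun a => μ {a}) 1 w.1 := by
    intro w
    have h1 := hindep.measure_inter_preimage_eq_mul (Finset.range k)
      (sets := fun j => {w.1.getD j 0}) (fun i _ => measurableSet_singleton _)
    have h2 : ∀ j, P (G j ⁻¹' {w.1.getD j 0}) = μ {w.1.getD j 0} := by
      intro j
      rw [← hdist j, Measure.map_apply (hmeas j) (measurableSet_singleton _)]
    rw [hA]
    simp only []
    rw [h1]
    rw [Finset.prod_congr rfl (fun j _ => h2 j)]
    rw [wt, prod_getD (fun a => μ {a} ^ 1) w.1, w.2.1]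
    simp
  -- conclusion
  calc (∑' w : PW 𝕀 k, wt (fun a => μ {a}) 1 w.1)
      = ∑' w : PW 𝕀 k, P (A w) := tsum_congr fun w => (hAmeasure w).symm
    _ = P (⋃ w, A w) := (measure_iUnion hAdisj hAmeas).symm
    _ ≤ P {ω | IsPrimitiveWord (List.ofFn fun j : Fin k => G j ω)} := by
        refine measure_mono ?_
        rintro ω hω
        obtain ⟨_, ⟨w, rfl⟩, hωw⟩ := hω
        have := hword w ω hωw
        simp only [Set.mem_setOf_eq, this]
        exact w.2.2.1
end Stmt12Aux

/-- let `(p_i)_{i ∈ 𝕀}` be a non-degenerate probability distribution `μ` on a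
countable set `𝕀 ⊆ ℝ` and let `G_1, G_2, …` be i.i.d. with this distribution. Then
`P((G_1, …, G_k) is primitive) → 1` as `k → ∞`, and for every fixed `l ≥ 1` the sum
`Σ_{w ∈ Q_k} (p_{w_1} ⋯ p_{w_k})^l` over primitive words of length `k` over `𝕀` is
asymptotically equivalent to `(Σ_{i ∈ 𝕀} p_i^l)^k = ‖p‖_l^{lk}` (the sum over all words of
length `k`), in the sense that the ratio tends to `1`. -/
theorem stmt12 {Ω : Type*} [MeasurableSpace Ω] (P : Measure Ω) [IsProbabilityMeasure P]
    (𝕀 : Set ℝ) (h𝕀 : 𝕀.Countable)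
    (μ : Measure ℝ) [IsProbabilityMeasure μ] (hμ : μ 𝕀ᶜ = 0)
    (hnondeg : ∀ a : ℝ, μ {a} ≠ 1)
    (G : ℕ → Ω → ℝ) (hmeas : ∀ j, Measurable (G j))
    (hindep : iIndepFun G P)
    (hdist : ∀ j, Measure.map (G j) P = μ) :
    Tendsto (fun k : ℕ =>
        P {ω | IsPrimitiveWord (List.ofFn (fun j : Fin k => G j ω))}) atTop (𝓝 1) ∧
    ∀ l : ℕ, 1 ≤ l →
      Tendsto (fun k : ℕ =>
          (∑' w : {w : List ℝ // w.length = k ∧ IsPrimitiveWord w ∧ ∀ a ∈ w, a ∈ 𝕀},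
              ((w.1.map fun a => (μ {a}).toReal).prod) ^ l) /
            (∑' i : 𝕀, (μ {(i : ℝ)}).toReal ^ l) ^ k) atTop (𝓝 1) := by
  classical
  set p : ℝ → ℝ≥0∞ := fun a => μ {a} with hp
  have hp1 : ∀ a, p a ≤ 1 := fun a => prob_le_one
  have hsum : ∑' i : 𝕀, p (i : ℝ) = 1 := Stmt12Aux.tsum_singleton_eq_one 𝕀 h𝕀 μ hμ
  obtain ⟨b, hb, c, hc, hbc, hpb, hpc⟩ := Stmt12Aux.exists_atoms 𝕀 h𝕀 μ hμ hnondeg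
  have hnum : ∀ l k : ℕ,
      (∑' w : {w : List ℝ // w.length = k ∧ IsPrimitiveWord w ∧ ∀ a ∈ w, a ∈ 𝕀},
        ((w.1.map fun a => (μ {a}).toReal).prod) ^ l)
      = (∑' w : Stmt12Aux.PW 𝕀 k, Stmt12Aux.wt p l w.1).toReal := by
    intro l k
    rw [ENNReal.tsum_toReal_eq (f := fun w : Stmt12Aux.PW 𝕀 k => Stmt12Aux.wt p l w.1)
      (fun w => ne_top_of_le_ne_top ENNReal.one_ne_top (Stmt12Aux.wt_le_one hp1 w.1))]
    exact tsum_congr fun w => Stmt12Aux.wt_toReal p l w.1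
  have hden : ∀ l : ℕ, (∑' i : 𝕀, (μ {(i : ℝ)}).toReal ^ l)
      = (∑' i : 𝕀, p (i : ℝ) ^ l).toReal := by
    intro l
    rw [ENNReal.tsum_toReal_eq (f := fun i : 𝕀 => p (i : ℝ) ^ l)
      (fun i => ne_top_of_le_ne_top ENNReal.one_ne_top (pow_le_one' (hp1 _) l))]
    exact tsum_congr fun i => (ENNReal.toReal_pow _ _).symm
  constructor
  · have hmaster := Stmt12Aux.master p 𝕀 hp1 hsum b c hb hc hbc hpb hpc 1 le_rfl
    have hS1 : (∑' i : 𝕀, p (i : ℝ) ^ 1) = 1 := by simpa [pow_one] using hsum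
    have hT1 : Tendsto (fun k : ℕ => (∑' w : Stmt12Aux.PW 𝕀 k, Stmt12Aux.wt p 1 w.1).toReal)
        atTop (𝓝 1) := by
      refine hmaster.congr fun k => ?_
      rw [hS1]
      simp
    have hT1le : ∀ k, (∑' w : Stmt12Aux.PW 𝕀 k, Stmt12Aux.wt p 1 w.1) ≤ 1 := fun k =>
      le_trans (Stmt12Aux.prob_ge P 𝕀 h𝕀 μ G hmeas hindep hdist k) prob_le_one
    have hT1E : Tendsto (fun k : ℕ => ∑' w : Stmt12Aux.PW 𝕀 k, Stmt12Aux.wt p 1 w.1)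
        atTop (𝓝 1) := by
      rw [← ENNReal.tendsto_toReal_iff (fun k => ne_top_of_le_ne_top ENNReal.one_ne_top
        (hT1le k)) ENNReal.one_ne_top]
      simpa using hT1
    exact tendsto_of_tendsto_of_tendsto_of_le_of_le hT1E tendsto_const_nhds
      (fun k => Stmt12Aux.prob_ge P 𝕀 h𝕀 μ G hmeas hindep hdist k) (fun k => prob_le_one)
  · intro l hl
    have hmaster := Stmt12Aux.master p 𝕀 hp1 hsum b c hb hc hbc hpb hpc l hl
    refine hmaster.congr fun k => ?_
    rw [hnum l k, hden l]
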